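/- Let μ_S and μ_T be probability measures on a measurable space X, let ℓ be a loss function (jointly measurable, nonnegative, symmetric, satisfying the pointwise triangle inequality, bounded by J ≥ 0), let F be a set of measurable functions X → ℝ, and let h : X → ℝ be a measurable labeling function. Then for every f, f* ∈ F, L_{μ_T}(f, h) ≤ L_{μ_S}(f, h) + disc_F(μ_S, μ_T) + L_{μ_T}(f*, h) + L_{μ_S}(f*, h), where disc_F(μ_S, μ_T) = ⨆_{f₁, f₂ ∈ F} |L_{μ_S}(f₁, f₂) − L_{μ_T}(f₁, f₂)|. -/
import Mathlib


open MeasureTheory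

/-- Expected loss of a pair of functions under a measure. -/
noncomputable def expLoss {X : Type*} [MeasurableSpace X] (ℓ : ℝ → ℝ → ℝ)
    (μ : Measure X) (f f' : X → ℝ) : ℝ := ∫ x, ℓ (f x) (f' x) ∂μ

/-- The discrepancy distance between two measures over a hypothesis class. -/
noncomputable def disc {X : Type*} [MeasurableSpace X] (ℓ : ℝ → ℝ → ℝ)
    (F : Set (X → ℝ)) (μ ν : Measure X) : ℝ :=
  sSup {d : ℝ | ∃ f₁ ∈ F, ∃ f₂ ∈ F, d = |expLoss ℓ μ f₁ f₂ - expLoss ℓ ν f₁ f₂|}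

lemma integrable_loss {X : Type*} [MeasurableSpace X] (μ : Measure X)
    [IsProbabilityMeasure μ] (ℓ : ℝ → ℝ → ℝ) (J : ℝ)
    (hmeas : Measurable (Function.uncurry ℓ))
    (hnonneg : ∀ a b, 0 ≤ ℓ a b) (hbound : ∀ a b, ℓ a b ≤ J)
    (f g : X → ℝ) (hf : Measurable f) (hg : Measurable g) :
    Integrable (fun x => ℓ (f x) (g x)) μ := by
  have hm : Measurable (fun x => ℓ (f x) (g x)) := hmeas.comp (hf.prodMk hg)
  refine (integrable_const J).mono' hm.aestronglyMeasurable ?_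
  filter_upwards with x
  rw [Real.norm_eq_abs, abs_of_nonneg (hnonneg _ _)]
  exact hbound _ _

/-- Single-task risk-transfer bound of Theorem 2.1: the test risk of `f` is bounded by
its selected-set risk plus the discrepancy plus the joint risk of an optimal `f*`. -/
theorem risk_transfer_single {X : Type*} [MeasurableSpace X]
    (μS μT : Measure X) [IsProbabilityMeasure μS] [IsProbabilityMeasure μT]
    (ℓ : ℝ → ℝ → ℝ) (J : ℝ) (hJ : 0 ≤ J)
    (hmeas : Measurable (Function.uncurry ℓ))
    (hnonneg : ∀ a b, 0 ≤ ℓ a b)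
    (hsymm : ∀ a b, ℓ a b = ℓ b a)
    (htri : ∀ a b c, ℓ a c ≤ ℓ a b + ℓ b c)
    (hbound : ∀ a b, ℓ a b ≤ J)
    (F : Set (X → ℝ)) (hF : ∀ f ∈ F, Measurable f)
    (h : X → ℝ) (hh : Measurable h)
    (f : X → ℝ) (hfF : f ∈ F) (fstar : X → ℝ) (hfstarF : fstar ∈ F) :
    expLoss ℓ μT f h ≤
      expLoss ℓ μS f h + disc ℓ F μS μT + expLoss ℓ μT fstar h +
        expLoss ℓ μS fstar h := by
  have hf := hF f hfF
  have hfs := hF fstar hfstarF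
  have int : ∀ (μ : Measure X) [IsProbabilityMeasure μ] (g g' : X → ℝ),
      Measurable g → Measurable g' → Integrable (fun x => ℓ (g x) (g' x)) μ :=
    fun μ _ g g' hg hg' => integrable_loss μ ℓ J hmeas hnonneg hbound g g' hg hg'
  -- Step 1: L_T(f,h) ≤ L_T(f,f*) + L_T(f*,h)
  have step1 : expLoss ℓ μT f h ≤ expLoss ℓ μT f fstar + expLoss ℓ μT fstar h := by
    rw [expLoss, expLoss, expLoss, ← integral_add (int μT f fstar hf hfs) (int μT fstar h hfs hh)]
    exact integral_mono (int μT f h hf hh)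
      ((int μT f fstar hf hfs).add (int μT fstar h hfs hh)) (fun x => htri _ _ _)
  -- Step 2: L_T(f,f*) ≤ L_S(f,f*) + disc
  have step2 : expLoss ℓ μT f fstar ≤ expLoss ℓ μS f fstar + disc ℓ F μS μT := by
    have hmem : |expLoss ℓ μS f fstar - expLoss ℓ μT f fstar| ∈
        {d : ℝ | ∃ f₁ ∈ F, ∃ f₂ ∈ F, d = |expLoss ℓ μS f₁ f₂ - expLoss ℓ μT f₁ f₂|} :=
      ⟨f, hfF, fstar, hfstarF, rfl⟩
    have hbdd : BddAbove {d : ℝ | ∃ f₁ ∈ F, ∃ f₂ ∈ F,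
        d = |expLoss ℓ μS f₁ f₂ - expLoss ℓ μT f₁ f₂|} := by
      refine ⟨J, fun d hd => ?_⟩
      obtain ⟨f₁, h₁, f₂, h₂, rfl⟩ := hd
      have e1 : 0 ≤ expLoss ℓ μS f₁ f₂ :=
        integral_nonneg fun x => hnonneg _ _
      have e2 : 0 ≤ expLoss ℓ μT f₁ f₂ :=
        integral_nonneg fun x => hnonneg _ _
      have e3 : expLoss ℓ μS f₁ f₂ ≤ J := by
        rw [expLoss]
        calc ∫ x, ℓ (f₁ x) (f₂ x) ∂μS ≤ ∫ _, J ∂μS :=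
              integral_mono (int μS f₁ f₂ (hF _ h₁) (hF _ h₂)) (integrable_const J)
                (fun x => hbound _ _)
          _ = J := by simp
      have e4 : expLoss ℓ μT f₁ f₂ ≤ J := by
        rw [expLoss]
        calc ∫ x, ℓ (f₁ x) (f₂ x) ∂μT ≤ ∫ _, J ∂μT :=
              integral_mono (int μT f₁ f₂ (hF _ h₁) (hF _ h₂)) (integrable_const J)
                (fun x => hbound _ _)
          _ = J := by simp
      rw [abs_sub_le_iff]
      constructor <;> linarith
    have := le_csSup hbdd hmem
    rw [disc] at *
    have habs : expLoss ℓ μT f fstar - expLoss ℓ μS f fstar ≤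
        |expLoss ℓ μS f fstar - expLoss ℓ μT f fstar| := by
      rw [abs_sub_comm]; exact le_abs_self _
    linarith
  -- Step 3: L_S(f,f*) ≤ L_S(f,h) + L_S(f*,h)
  have step3 : expLoss ℓ μS f fstar ≤ expLoss ℓ μS f h + expLoss ℓ μS fstar h := by
    have : expLoss ℓ μS f fstar ≤ expLoss ℓ μS f h + expLoss ℓ μS h fstar := by
      rw [expLoss, expLoss, expLoss, ← integral_add (int μS f h hf hh) (int μS h fstar hh hfs)]
      exact integral_mono (int μS f fstar hf hfs)
        ((int μS f h hf hh).add (int μS h fstar hh hfs)) (fun x => htri _ _ _)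
    have heq : expLoss ℓ μS h fstar = expLoss ℓ μS fstar h := by
      unfold expLoss; congr 1; ext x; exact hsymm _ _
    linarith
  linarith
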